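/- Let A ⊆ ℝ^d be a compact set and let 0 < s < r. If A satisfies the morphological closing identity (A ⊕ B_s[0]) ⊖ B_s[0] = A (i.e., A is s-convex in the sense that its closing by the closed ball of radius s equals A), then (A ⊕ B_s[0]) ⊖ B_r[0] = A ⊖ B_{r−s}[0]. -/
import Mathlib

open MeasureTheory Filter Set
open scoped Pointwise

noncomputable section

/-- The `r`-convex hull `C_r(A)`: the intersection of the complements of all open balls of
radius `r` that do not meet `A`. -/
def rConvexHull {d : ℕ} (r : ℝ) (A : Set (EuclideanSpace ℝ (Fin d))) :
    Set (EuclideanSpace ℝ (Fin d)) :=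
  ⋂ c ∈ {c : EuclideanSpace ℝ (Fin d) | Metric.ball c r ∩ A = ∅}, (Metric.ball c r)ᶜ

/-- Minkowski erosion `C ⊖ D = {x : x + D ⊆ C}`. -/
def erosion {d : ℕ} (C D : Set (EuclideanSpace ℝ (Fin d))) :
    Set (EuclideanSpace ℝ (Fin d)) := {x | ∀ y ∈ D, x + y ∈ C}

/-- Morphological identity used in the proof of Theorem 3.2: if `A` is compact,
`0 < s < r` and the closing of `A` by the closed ball of radius `s` equals `A`, then
`(A ⊕ B_s[0]) ⊖ B_r[0] = A ⊖ B_{r-s}[0]`. -/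
theorem statement18 {d : ℕ} (A : Set (EuclideanSpace ℝ (Fin d))) (hA : IsCompact A)
    (s r : ℝ) (hs : 0 < s) (hsr : s < r)
    (hclosing : erosion (A + Metric.closedBall (0 : EuclideanSpace ℝ (Fin d)) s)
      (Metric.closedBall (0 : EuclideanSpace ℝ (Fin d)) s) = A) :
    erosion (A + Metric.closedBall (0 : EuclideanSpace ℝ (Fin d)) s)
      (Metric.closedBall (0 : EuclideanSpace ℝ (Fin d)) r) =
    erosion A (Metric.closedBall (0 : EuclideanSpace ℝ (Fin d)) (r - s)) := by
  have hball : Metric.closedBall (0 : EuclideanSpace ℝ (Fin d)) (r - s) +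
      Metric.closedBall (0 : EuclideanSpace ℝ (Fin d)) s =
      Metric.closedBall (0 : EuclideanSpace ℝ (Fin d)) r := by
    rw [closedBall_add_closedBall (by linarith) hs.le, add_zero, sub_add_cancel]
  ext x
  constructor
  · intro hx y hy
    rw [← hclosing]
    intro z hz
    have : y + z ∈ Metric.closedBall (0 : EuclideanSpace ℝ (Fin d)) r := by
      rw [← hball]; exact Set.add_mem_add hy hz
    rw [add_assoc]
    exact hx _ this
  · intro hx y hy
    rw [← hball] at hy
    obtain ⟨a, ha, b, hb, rfl⟩ := hy
    rw [← add_assoc]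
    have := hx a ha
    rw [← hclosing] at this
    exact this b hb
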